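/- Let q have a double zero at α, i.e. q'/q = -2/x + 2/(1-x) + 2/(x-α) near α (with α ≠ 0, 1). Define q̲ = q + (1/4)(q'/q)² - (1/2)(q'/q)'. Then lim_{x→α} (x-α)² q̲(x) = 2 = -(1-3²)/4. -/

import Mathlib

open Filter Topology

set_option maxHeartbeats 2000000


/-- If q has a double zero at α, i.e. q'/q = -2/x + 2/(1-x) + 2/(x-α)
near α (α ≠ 0,1), and q̲ = q + (1/4)(q'/q)² - (1/2)(q'/q)', then
lim_{x→α} (x-α)² q̲(x) = 2 = -(1-3²)/4. -/
theorem stmt7 (q : ℂ → ℂ) (α : ℂ) (hα0 : α ≠ 0) (hα1 : α ≠ 1)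
    (hlog : ∀ x : ℂ, x ≠ 0 → x ≠ 1 → x ≠ α →
      deriv q x / q x = -2/x + 2/(1-x) + 2/(x-α))
    (hzero : Filter.Tendsto q (nhdsWithin α {α}ᶜ) (nhds 0)) :
    Filter.Tendsto
      (fun x : ℂ => (x-α)^2 *
        (q x + (1/4) * (deriv q x / q x)^2
          - (1/2) * deriv (fun y => deriv q y / q y) x))
      (nhdsWithin α {α}ᶜ) (nhds 2)
    ∧ (2 : ℂ) = -(1 - 3^2)/4 := by
  constructor
  · set G : ℂ → ℂ := fun x => (x-α)^2 * q x +
      ((1/4)*((x-α)*(-2/x+2/(1-x))+2)^2 - (1/2)*((x-α)^2*(2/x^2+2/(1-x)^2) - 2)) with hG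
    have hα1' : (1:ℂ) - α ≠ 0 := sub_ne_zero.mpr (Ne.symm hα1)
    -- the open set where everything is nice
    have hSopen : IsOpen ({0, 1, α} : Set ℂ)ᶜ :=
      (Set.toFinite ({0,1,α} : Set ℂ)).isClosed.isOpen_compl
    have hSmem : ({0, 1, α} : Set ℂ)ᶜ ∈ nhdsWithin α {α}ᶜ := by
      have : ({0, 1} : Set ℂ)ᶜ ∈ nhds α := by
        refine ((Set.toFinite ({0,1} : Set ℂ)).isClosed.isOpen_compl).mem_nhds ?_
        simp [hα0, hα1]
      filter_upwards [nhdsWithin_le_nhds this, self_mem_nhdsWithin] with x hx hx'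
      simp only [Set.mem_compl_iff, Set.mem_insert_iff, Set.mem_singleton_iff] at *
      tauto
    have heq : (fun x : ℂ => (x-α)^2 *
        (q x + (1/4) * (deriv q x / q x)^2
          - (1/2) * deriv (fun y => deriv q y / q y) x)) =ᶠ[nhdsWithin α {α}ᶜ] G := by
      filter_upwards [hSmem] with x hx
      simp only [Set.mem_compl_iff, Set.mem_insert_iff, Set.mem_singleton_iff, not_or] at hx
      obtain ⟨hx0, hx1, hxα⟩ := hx
      have hx1' : (1:ℂ) - x ≠ 0 := sub_ne_zero.mpr (Ne.symm hx1)
      have hxα' : x - α ≠ 0 := sub_ne_zero.mpr hxα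
      have hd : deriv (fun y => deriv q y / q y) x
          = 2/x^2 + 2/(1-x)^2 - 2/(x-α)^2 := by
        have hev : (fun y => deriv q y / q y)
            =ᶠ[nhds x] (fun y => -2/y + 2/(1-y) + 2/(y-α)) := by
          filter_upwards [hSopen.mem_nhds (by
            simp only [Set.mem_compl_iff, Set.mem_insert_iff, Set.mem_singleton_iff, not_or]
            exact ⟨hx0, hx1, hxα⟩)] with y hy
          simp only [Set.mem_compl_iff, Set.mem_insert_iff, Set.mem_singleton_iff, not_or] at hy
          exact hlog y hy.1 hy.2.1 hy.2.2
        rw [hev.deriv_eq]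
        have h1 : HasDerivAt (fun y : ℂ => -2/y) (2/x^2) x := by
          have := (hasDerivAt_const x (-2:ℂ)).div (hasDerivAt_id x) hx0
          exact this.congr_deriv (by simp only [id]; ring)
        have h2 : HasDerivAt (fun y : ℂ => 2/(1-y)) (2/(1-x)^2) x := by
          have hsub : HasDerivAt (fun y : ℂ => 1 - y) (-1) x := by
            simpa using (hasDerivAt_id' x).const_sub (1:ℂ)
          have := (hasDerivAt_const x (2:ℂ)).div hsub hx1'
          exact this.congr_deriv (by ring)
        have h3 : HasDerivAt (fun y : ℂ => 2/(y-α)) (-(2/(x-α)^2)) x := by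
          have hsub : HasDerivAt (fun y : ℂ => y - α) 1 x := by
            simpa using (hasDerivAt_id' x).sub_const α
          have := (hasDerivAt_const x (2:ℂ)).div hsub hxα'
          exact this.congr_deriv (by ring)
        have := (h1.add h2).add h3
        rw [show (fun y : ℂ => -2/y + 2/(1-y) + 2/(y-α))
          = ((fun y => -2/y) + (fun y => 2/(1-y))) + (fun y => 2/(y-α)) from rfl, this.deriv]
        ring
      rw [hlog x hx0 hx1 hxα, hd, hG]
      have e1 : (x-α)*(-2/x + 2/(1-x) + 2/(x-α)) = (x-α)*(-2/x+2/(1-x)) + 2 := by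
        field_simp
      have e2 : (x-α)^2*(2/x^2 + 2/(1-x)^2 - 2/(x-α)^2)
          = (x-α)^2*(2/x^2+2/(1-x)^2) - 2 := by
        field_simp
      calc (x-α)^2 * (q x + (1/4)*(-2/x + 2/(1-x) + 2/(x-α))^2
              - (1/2)*(2/x^2 + 2/(1-x)^2 - 2/(x-α)^2))
          = (x-α)^2*q x + (1/4)*((x-α)*(-2/x + 2/(1-x) + 2/(x-α)))^2
              - (1/2)*((x-α)^2*(2/x^2 + 2/(1-x)^2 - 2/(x-α)^2)) := by ring
        _ = (x-α)^2 * q x +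
              ((1/4)*((x-α)*(-2/x+2/(1-x))+2)^2
                - (1/2)*((x-α)^2*(2/x^2+2/(1-x)^2) - 2)) := by rw [e1, e2]; ring
    refine Tendsto.congr' heq.symm ?_
    have hA : Tendsto (fun x : ℂ => (x-α)^2 * q x) (nhdsWithin α {α}ᶜ) (nhds 0) := by
      have h1 : Tendsto (fun x : ℂ => (x-α)^2) (nhdsWithin α {α}ᶜ) (nhds 0) := by
        have : ContinuousAt (fun x : ℂ => (x-α)^2) α := by fun_prop
        simpa using (this.tendsto.mono_left nhdsWithin_le_nhds)
      simpa using h1.mul hzero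
    have hB : Tendsto (fun x : ℂ =>
        (1/4)*((x-α)*(-2/x+2/(1-x))+2)^2 - (1/2)*((x-α)^2*(2/x^2+2/(1-x)^2) - 2))
        (nhdsWithin α {α}ᶜ) (nhds 2) := by
      have hc : ContinuousAt (fun x : ℂ =>
          (1/4)*((x-α)*(-2/x+2/(1-x))+2)^2 - (1/2)*((x-α)^2*(2/x^2+2/(1-x)^2) - 2)) α := by
        fun_prop (disch := first
          | exact hα0
          | exact sub_ne_zero.mpr (Ne.symm hα1)
          | exact pow_ne_zero _ hα0
          | exact pow_ne_zero _ (sub_ne_zero.mpr (Ne.symm hα1)))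
      have h := hc.tendsto.mono_left (nhdsWithin_le_nhds : nhdsWithin α {α}ᶜ ≤ nhds α)
      convert h using 2
      norm_num [sub_self]
    rw [hG]
    simpa only [zero_add] using hA.add hB
  · norm_num
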